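/- A plane section of the right circular cone parallel to a generating line is a parabola (Apollonius's symptom of the parabola, in Cartesian form): fix a real number c ≠ 0 and define φ : EuclideanSpace ℝ (Fin 2) → EuclideanSpace ℝ (Fin 3) by φ v = ![v 0 / Real.sqrt 2, v 1, v 0 / Real.sqrt 2 + c]. Then (i) φ is an isometry (it preserves Euclidean distances), and (ii) the image under φ of the parabola {v : EuclideanSpace ℝ (Fin 2) | (v 1)^2 = Real.sqrt 2 * c * (v 0) + c^2} equals the intersection of the cone {q : EuclideanSpace ℝ (Fin 3) | (q 0)^2 + (q 1)^2 = (q 2)^2} with the plane {q : EuclideanSpace ℝ (Fin 3) | q 2 = q 0 + c}. -/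

import Mathlib

/-- The isometric parametrization of the plane `z = x + c` in Euclidean
3-space. -/
noncomputable def planeParam (c : ℝ) (v : EuclideanSpace ℝ (Fin 2)) : EuclideanSpace ℝ (Fin 3) :=
  !₂[v 0 / Real.sqrt 2, v 1, v 0 / Real.sqrt 2 + c]

lemma planeParam_apply (c : ℝ) (v : EuclideanSpace ℝ (Fin 2)) :
    planeParam c v 0 = v 0 / Real.sqrt 2 ∧ planeParam c v 1 = v 1 ∧
      planeParam c v 2 = v 0 / Real.sqrt 2 + c := by
  refine ⟨rfl, rfl, rfl⟩

/-- A plane section of the right circular cone parallel to a generating line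
is a parabola (Apollonius's symptom of the parabola, in Cartesian form). -/
theorem cone_section_parabola (c : ℝ) (hc : c ≠ 0) :
    Isometry (planeParam c) ∧
      planeParam c ''
          {v : EuclideanSpace ℝ (Fin 2) | (v 1) ^ 2 = Real.sqrt 2 * c * (v 0) + c ^ 2} =
        {q : EuclideanSpace ℝ (Fin 3) | (q 0) ^ 2 + (q 1) ^ 2 = (q 2) ^ 2} ∩
          {q : EuclideanSpace ℝ (Fin 3) | q 2 = q 0 + c} := by
  have h2 : Real.sqrt 2 ^ 2 = 2 := Real.sq_sqrt (by norm_num)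
  have h2ne : Real.sqrt 2 ≠ 0 := by positivity
  constructor
  · refine Isometry.of_dist_eq fun x y => ?_
    rw [EuclideanSpace.dist_eq, EuclideanSpace.dist_eq]
    rw [Fin.sum_univ_three, Fin.sum_univ_two]
    simp only [planeParam, Matrix.cons_val_zero, Matrix.cons_val_one, Matrix.head_cons,
      Matrix.cons_val_two, Matrix.tail_cons, Real.dist_eq]
    congr 1
    have : |x 0 / Real.sqrt 2 - y 0 / Real.sqrt 2| ^ 2 = (x 0 - y 0) ^ 2 / 2 := by
      rw [sq_abs, div_sub_div_same, div_pow, h2]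
    have h3 : |x 0 / Real.sqrt 2 + c - (y 0 / Real.sqrt 2 + c)| ^ 2 = (x 0 - y 0) ^ 2 / 2 := by
      rw [show x 0 / Real.sqrt 2 + c - (y 0 / Real.sqrt 2 + c) = x 0 / Real.sqrt 2 - y 0 / Real.sqrt 2 by ring]
      exact this
    rw [this, h3, sq_abs, sq_abs]
    ring
  · ext q
    simp only [Set.mem_image, Set.mem_setOf_eq, Set.mem_inter_iff]
    constructor
    · rintro ⟨v, hv, rfl⟩
      obtain ⟨e0, e1, e2⟩ := planeParam_apply c v
      rw [e0, e1, e2]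
      constructor
      · have : (v 0 / Real.sqrt 2) ^ 2 = v 0 ^ 2 / 2 := by
          rw [div_pow, h2]
        rw [this, hv]
        field_simp
        ring_nf
        nlinarith [h2]
      · rfl
    · rintro ⟨hcone, hplane⟩
      refine ⟨(WithLp.equiv 2 (Fin 2 → ℝ)).symm ![Real.sqrt 2 * q 0, q 1], ?_, ?_⟩
      · show (q 1) ^ 2 = Real.sqrt 2 * c * (Real.sqrt 2 * q 0) + c ^ 2
        have h4 : Real.sqrt 2 * c * (Real.sqrt 2 * q 0) = 2 * c * q 0 := by
          linear_combination (c * q 0) * h2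
        rw [h4]
        rw [hplane] at hcone
        linear_combination hcone
      · ext i
        fin_cases i
        · show Real.sqrt 2 * q 0 / Real.sqrt 2 = q 0
          field_simp
        · rfl
        · show Real.sqrt 2 * q 0 / Real.sqrt 2 + c = q 2
          rw [hplane]; field_simp
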